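/- (Kernel outer bound by supporting tangent half-spaces) Let X = {x ∈ ℝⁿ | gᵢ(x) ≤ 1, i ∈ [m]} with each gᵢ continuously differentiable. Then ker X ⊆ {p | ⟨∇gᵢ(q), p − q⟩ ≤ 0 for all q ∈ ∂Xᵢ and all i ∈ [m]}, where ∂Xᵢ = {x | gᵢ(x) = 1, gⱼ(x) ≤ 1 ∀ j ≠ i}. -/

import Mathlib

open scoped RealInnerProductSpace

/-- The star kernel of a set `S` (stated without requiring `x ∈ S`). -/
def starKernel {n : ℕ} (S : Set (EuclideanSpace ℝ (Fin n))) :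
    Set (EuclideanSpace ℝ (Fin n)) :=
  {x | ∀ t ∈ Set.Icc (0 : ℝ) 1, ∀ y ∈ S, t • x + (1 - t) • y ∈ S}

/-- Kernel outer bound by supporting tangent half-spaces: for
`X = {x | gᵢ x ≤ 1 ∀ i}` with each `gᵢ` continuously differentiable,
`ker X` is contained in the intersection of linearized active constraints over
the pieces `∂Xᵢ = {x | gᵢ x = 1, gⱼ x ≤ 1 ∀ j ≠ i}` of the boundary. -/
theorem starKernel_subset_tangent_halfspaces {n m : ℕ}
    (g : Fin m → EuclideanSpace ℝ (Fin n) → ℝ)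
    (hg : ∀ i, ContDiff ℝ 1 (g i)) :
    starKernel {x | ∀ i, g i x ≤ 1} ⊆
      {p | ∀ i : Fin m, ∀ q : EuclideanSpace ℝ (Fin n),
        (g i q = 1 ∧ ∀ j ≠ i, g j q ≤ 1) →
        ⟪gradient (g i) q, p - q⟫ ≤ 0} := by
  intro p hp i q ⟨hq1, hq2⟩
  -- q is in X
  have hqX : ∀ j, g j q ≤ 1 := by
    intro j
    by_cases hj : j = i
    · rw [hj, hq1]
    · exact hq2 j hj
  set φ : ℝ → ℝ := fun t => g i (q + t • (p - q)) with hφ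
  have hφt : ∀ t ∈ Set.Icc (0 : ℝ) 1, φ t ≤ 1 := by
    intro t ht
    have := hp t ht q hqX i
    have heq : t • p + (1 - t) • q = q + t • (p - q) := by
      simp [smul_sub, sub_smul]
      abel
    rw [heq] at this
    exact this
  have hφ0 : φ 0 = 1 := by simp [hφ, hq1]
  -- derivative of φ at 0
  have hline : HasDerivAt (fun t : ℝ => q + t • (p - q)) (p - q) 0 := by
    simpa using ((hasDerivAt_id (0 : ℝ)).smul_const (p - q)).const_add q
  have hfd : HasFDerivAt (g i) (fderiv ℝ (g i) q) q :=
    ((hg i).differentiable one_ne_zero q).hasFDerivAt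
  have hfd' : HasFDerivAt (g i) (fderiv ℝ (g i) q) (q + (0:ℝ) • (p - q)) := by
    simpa using hfd
  have hderiv : HasDerivAt φ (fderiv ℝ (g i) q (p - q)) 0 :=
    hfd'.comp_hasDerivAt 0 hline
  have hgrad : ⟪gradient (g i) q, p - q⟫ = fderiv ℝ (g i) q (p - q) := by
    rw [gradient]
    exact InnerProductSpace.toDual_symm_apply
  rw [hgrad]
  -- derivative within Ioi 0 as limit of slopes
  have hderivW : HasDerivWithinAt φ (fderiv ℝ (g i) q (p - q)) (Set.Ioi 0) 0 :=
    hderiv.hasDerivWithinAt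
  have htend : Filter.Tendsto (slope φ 0) (nhdsWithin 0 (Set.Ioi 0))
      (nhds (fderiv ℝ (g i) q (p - q))) := by
    have := (hasDerivWithinAt_iff_tendsto_slope).mp hderivW
    simpa [Set.diff_singleton_eq_self (by simp : (0:ℝ) ∉ Set.Ioi 0)]
      using this
  have hev : ∀ᶠ t in nhdsWithin 0 (Set.Ioi 0), slope φ 0 t ≤ 0 := by
    filter_upwards [Ioo_mem_nhdsGT_of_mem (by norm_num : (0:ℝ) ∈ Set.Ico 0 1)] with t ht
    have ht0 : (0:ℝ) < t := ht.1
    have ht1 : t ≤ 1 := le_of_lt ht.2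
    have hle : φ t ≤ 1 := hφt t ⟨le_of_lt ht0, ht1⟩
    have : slope φ 0 t = (φ t - 1) / t := by
      simp [slope, hφ0, div_eq_inv_mul]
    rw [this]
    exact div_nonpos_of_nonpos_of_nonneg (by linarith) (le_of_lt ht0)
  exact le_of_tendsto htend hev
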